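/- For all x, y ∈ [1.1, 1.9] one has 0 < r(x)·r(y)/d̄ < 1, where d̄ = ∫_{1.1}^{1.9} r(t)·g(t) dt. -/

import Mathlib

noncomputable def a₁ : ℝ := 2.9 / (2.9 / 1.1) ^ (0.95 : ℝ)
noncomputable def a₂ : ℝ := 2.9 / (2.9 / 1.1) ^ (0.45 : ℝ)

/-- The piecewise function `r` on `[1.1, 1.9]`. -/
noncomputable def r (x : ℝ) : ℝ :=
  if x < a₁ then (x - 1) / 2
  else if x ≤ a₂ then
    (x - 1) / 2 - (1 / Real.log (2.9 / 1.1)) *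
      Real.log (2.9 / (1 + 2 * Real.log (2.9 / x) / Real.log (2.9 / 1.1)))
  else (x - 1) / 2 - Real.log (2.9 / 1.9) / Real.log (2.9 / 1.1)

/-- The density `g` on `[1.1, 2.9]`. -/
noncomputable def g (x : ℝ) : ℝ := 1 / (x * Real.log (2.9 / 1.1))

open Real Finset MeasureTheory intervalIntegral

noncomputable def fm (x : ℝ) : ℝ :=
  (x - 1) / 2 - (1 / Real.log (2.9 / 1.1)) *
      Real.log (2.9 / (1 + 2 * Real.log (2.9 / x) / Real.log (2.9 / 1.1)))

lemma exp_ub {x : ℝ} (h0 : 0 ≤ x) (h1 : x ≤ 1) :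
    Real.exp x ≤ (∑ i ∈ range 10, x ^ i / i.factorial) + x ^ 10 * (11 / 36288000) := by
  have h := (abs_le.1 (Real.exp_bound (by rw [abs_of_nonneg h0]; exact h1) (n := 10) (by norm_num))).2
  rw [abs_of_nonneg h0] at h
  have e : ((Nat.succ 10 : ℕ) : ℝ) / ((Nat.factorial 10 : ℕ) * (10:ℕ)) = 11 / 36288000 := by
    norm_num [Nat.factorial]
  rw [e] at h
  linarith

lemma log_le_of_exp_ge {q c : ℝ} (hq : 0 < q)
    (h : q ≤ ∑ i ∈ range 10, c ^ i / i.factorial) (hc : 0 ≤ c) : Real.log q ≤ c := by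
  rw [Real.log_le_iff_le_exp hq]
  exact h.trans (Real.sum_le_exp_of_nonneg hc 10)

lemma le_log_of_exp_le {q c : ℝ} (hq : 0 < q) (h0 : 0 ≤ c) (h1 : c ≤ 1)
    (h : (∑ i ∈ range 10, c ^ i / i.factorial) + c ^ 10 * (11 / 36288000) ≤ q) :
    c ≤ Real.log q := by
  rw [Real.le_log_iff_exp_le hq]
  exact (exp_ub h0 h1).trans h

lemma hL_ub : Real.log (2.9 / 1.1) ≤ 0.96941 := by
  rw [show (2.9:ℝ)/1.1 = 29/11 by norm_num]
  exact log_le_of_exp_ge (by norm_num) (by norm_num [Finset.sum_range_succ, Nat.factorial]) (by norm_num)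

lemma hL_lb : (0.96936:ℝ) ≤ Real.log (2.9 / 1.1) := by
  rw [show (2.9:ℝ)/1.1 = 29/11 by norm_num]
  exact le_log_of_exp_le (by norm_num) (by norm_num) (by norm_num)
    (by norm_num [Finset.sum_range_succ, Nat.factorial])

lemma hM_ub : Real.log (2.9 / 1.9) ≤ 0.42286 := by
  rw [show (2.9:ℝ)/1.9 = 29/19 by norm_num]
  exact log_le_of_exp_ge (by norm_num) (by norm_num [Finset.sum_range_succ, Nat.factorial]) (by norm_num)

lemma hM_lb : (0.42283:ℝ) ≤ Real.log (2.9 / 1.9) := by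
  rw [show (2.9:ℝ)/1.9 = 29/19 by norm_num]
  exact le_log_of_exp_le (by norm_num) (by norm_num) (by norm_num)
    (by norm_num [Finset.sum_range_succ, Nat.factorial])

lemma h2913 : (0.8021:ℝ) ≤ Real.log (2.9 / 1.3) := by
  rw [show (2.9:ℝ)/1.3 = 29/13 by norm_num]
  exact le_log_of_exp_le (by norm_num) (by norm_num) (by norm_num)
    (by norm_num [Finset.sum_range_succ, Nat.factorial])

lemma h2914 : (0.7279:ℝ) ≤ Real.log (2.9 / 1.4) := by
  rw [show (2.9:ℝ)/1.4 = 29/14 by norm_num]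
  exact le_log_of_exp_le (by norm_num) (by norm_num) (by norm_num)
    (by norm_num [Finset.sum_range_succ, Nat.factorial])

lemma h2915 : (0.6592:ℝ) ≤ Real.log (2.9 / 1.5) := by
  rw [show (2.9:ℝ)/1.5 = 29/15 by norm_num]
  exact le_log_of_exp_le (by norm_num) (by norm_num) (by norm_num)
    (by norm_num [Finset.sum_range_succ, Nat.factorial])

lemma hLpos : (0:ℝ) < Real.log (2.9 / 1.1) := lt_of_lt_of_le (by norm_num) hL_lb

lemma rpow_pos95 : (0:ℝ) < (2.9 / 1.1 : ℝ) ^ (0.95 : ℝ) := Real.rpow_pos_of_pos (by norm_num) _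
lemma rpow_pos45 : (0:ℝ) < (2.9 / 1.1 : ℝ) ^ (0.45 : ℝ) := Real.rpow_pos_of_pos (by norm_num) _

lemma rpow95_eq : (2.9 / 1.1 : ℝ) ^ (0.95 : ℝ) = Real.exp (Real.log (2.9/1.1) * 0.95) :=
  Real.rpow_def_of_pos (by norm_num) _
lemma rpow45_eq : (2.9 / 1.1 : ℝ) ^ (0.45 : ℝ) = Real.exp (Real.log (2.9/1.1) * 0.45) :=
  Real.rpow_def_of_pos (by norm_num) _

lemma ha1_lb : (1.15:ℝ) ≤ a₁ := by
  have h1 : (2.9 / 1.1 : ℝ) ^ (0.95 : ℝ) ≤ 2.9 / 1.15 := by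
    rw [rpow95_eq]
    calc Real.exp (Real.log (2.9/1.1) * 0.95) ≤ Real.exp 0.9209395 :=
          Real.exp_le_exp.2 (by nlinarith [hL_ub, hLpos])
      _ ≤ (∑ i ∈ range 10, (0.9209395:ℝ) ^ i / i.factorial) + 0.9209395 ^ 10 * (11 / 36288000) :=
          exp_ub (by norm_num) (by norm_num)
      _ ≤ 2.9 / 1.15 := by norm_num [Finset.sum_range_succ, Nat.factorial]
  rw [a₁, le_div_iff₀ rpow_pos95]
  nlinarith [rpow_pos95]

lemma ha1_ub : a₁ ≤ 1.156 := by
  have h1 : (2.9:ℝ) / 1.156 ≤ (2.9 / 1.1 : ℝ) ^ (0.95 : ℝ) := by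
    rw [rpow95_eq]
    calc (2.9:ℝ)/1.156 ≤ ∑ i ∈ range 10, (0.920892:ℝ) ^ i / i.factorial := by
          norm_num [Finset.sum_range_succ, Nat.factorial]
      _ ≤ Real.exp 0.920892 := Real.sum_le_exp_of_nonneg (by norm_num) 10
      _ ≤ Real.exp (Real.log (2.9/1.1) * 0.95) := Real.exp_le_exp.2 (by nlinarith [hL_lb])
  rw [a₁, div_le_iff₀ rpow_pos95]
  nlinarith [rpow_pos95]

lemma ha2_lb : (1.873:ℝ) ≤ a₂ := by
  have h1 : (2.9 / 1.1 : ℝ) ^ (0.45 : ℝ) ≤ 2.9 / 1.873 := by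
    rw [rpow45_eq]
    calc Real.exp (Real.log (2.9/1.1) * 0.45) ≤ Real.exp 0.4362345 :=
          Real.exp_le_exp.2 (by nlinarith [hL_ub, hLpos])
      _ ≤ (∑ i ∈ range 10, (0.4362345:ℝ) ^ i / i.factorial) + 0.4362345 ^ 10 * (11 / 36288000) :=
          exp_ub (by norm_num) (by norm_num)
      _ ≤ 2.9 / 1.873 := by norm_num [Finset.sum_range_succ, Nat.factorial]
  rw [a₂, le_div_iff₀ rpow_pos45]
  nlinarith [rpow_pos45]

lemma ha2_ub : a₂ ≤ 1.876 := by
  have h1 : (2.9:ℝ) / 1.876 ≤ (2.9 / 1.1 : ℝ) ^ (0.45 : ℝ) := by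
    rw [rpow45_eq]
    calc (2.9:ℝ)/1.876 ≤ ∑ i ∈ range 10, (0.436212:ℝ) ^ i / i.factorial := by
          norm_num [Finset.sum_range_succ, Nat.factorial]
      _ ≤ Real.exp 0.436212 := Real.sum_le_exp_of_nonneg (by norm_num) 10
      _ ≤ Real.exp (Real.log (2.9/1.1) * 0.45) := Real.exp_le_exp.2 (by nlinarith [hL_lb])
  rw [a₂, div_le_iff₀ rpow_pos45]
  nlinarith [rpow_pos45]

lemma log_29_a1 : Real.log (2.9 / a₁) = 0.95 * Real.log (2.9 / 1.1) := by
  have h : (2.9:ℝ) / a₁ = (2.9 / 1.1 : ℝ) ^ (0.95 : ℝ) := by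
    rw [a₁]; field_simp
  rw [h, Real.log_rpow (by norm_num)]

lemma log_29_a2 : Real.log (2.9 / a₂) = 0.45 * Real.log (2.9 / 1.1) := by
  have h : (2.9:ℝ) / a₂ = (2.9 / 1.1 : ℝ) ^ (0.45 : ℝ) := by
    rw [a₂]; field_simp
  rw [h, Real.log_rpow (by norm_num)]

lemma fm_a1 : fm a₁ = (a₁ - 1) / 2 := by
  have hL0 := hLpos.ne'
  rw [fm, log_29_a1]
  have h : 1 + 2 * (0.95 * Real.log (2.9/1.1)) / Real.log (2.9/1.1) = 2.9 := by
    field_simp; ring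
  rw [h, show (2.9:ℝ)/2.9 = 1 by norm_num, Real.log_one]
  ring

lemma fm_a2 : fm a₂ = (a₂ - 1) / 2 - (1 / Real.log (2.9/1.1)) * Real.log (2.9 / 1.9) := by
  have hL0 := hLpos.ne'
  rw [fm, log_29_a2]
  have h : 1 + 2 * (0.45 * Real.log (2.9/1.1)) / Real.log (2.9/1.1) = 1.9 := by
    field_simp; ring
  rw [h]

lemma w_pos {x : ℝ} (hx0 : 0 < x) (hx : x ≤ 2.9) :
    0 < 1 + 2 * Real.log (2.9 / x) / Real.log (2.9 / 1.1) := by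
  have h : 0 ≤ Real.log (2.9 / x) := Real.log_nonneg (by rw [le_div_iff₀ hx0]; linarith)
  have := hLpos
  positivity

lemma fm_contOn : ContinuousOn fm (Set.Icc a₁ a₂) := by
  have hL0 := hLpos.ne'
  apply ContinuousOn.sub
  · exact (continuousOn_id.sub continuousOn_const).div_const 2
  · apply ContinuousOn.mul continuousOn_const
    apply ContinuousOn.log
    · apply ContinuousOn.div continuousOn_const
      · apply ContinuousOn.add continuousOn_const
        apply ContinuousOn.div_const
        apply ContinuousOn.mul continuousOn_const
        apply ContinuousOn.log
        · exact continuousOn_const.div continuousOn_id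
            (fun x hx => by have := lt_of_lt_of_le (by norm_num : (0:ℝ) < 1.15) (ha1_lb.trans hx.1); exact this.ne')
        · intro x hx
          have hx0 : (0:ℝ) < x := lt_of_lt_of_le (by norm_num) (ha1_lb.trans hx.1)
          positivity
      · intro x hx
        have hx0 : (0:ℝ) < x := lt_of_lt_of_le (by norm_num) (ha1_lb.trans hx.1)
        exact (w_pos hx0 (hx.2.trans (ha2_ub.trans (by norm_num)))).ne'
    · intro x hx
      have hx0 : (0:ℝ) < x := lt_of_lt_of_le (by norm_num) (ha1_lb.trans hx.1)
      have := w_pos hx0 (hx.2.trans (ha2_ub.trans (by norm_num)))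
      positivity

lemma fm_deriv_neg : ∀ x ∈ Set.Ioo a₁ a₂, deriv fm x < 0 := by
  intro x hx
  obtain ⟨hxl, hxr⟩ := hx
  have hxl15 : (1.15:ℝ) < x := lt_of_le_of_lt ha1_lb hxl
  have hxu : x < 1.876 := lt_of_lt_of_le hxr ha2_ub
  have hx0 : (0:ℝ) < x := by linarith
  set L := Real.log (2.9 / 1.1) with hLdef
  have hL0 : 0 < L := hLpos
  have hlognn : 0 ≤ Real.log (2.9 / x) := Real.log_nonneg (by rw [le_div_iff₀ hx0]; linarith)
  have hwpos : 0 < 1 + 2 * Real.log (2.9 / x) / L := by positivity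
  -- derivative chain
  have h1 : HasDerivAt (fun t : ℝ => 2.9 / t) (2.9 * -(x ^ 2)⁻¹) x := by
    simpa [div_eq_mul_inv] using (hasDerivAt_inv hx0.ne').const_mul (2.9 : ℝ)
  have h2 : HasDerivAt (fun t : ℝ => Real.log (2.9 / t))
      ((2.9 * -(x ^ 2)⁻¹) / (2.9 / x)) x := h1.log (by positivity)
  have h3 : HasDerivAt (fun t : ℝ => 1 + 2 * Real.log (2.9 / t) / L)
      (2 * ((2.9 * -(x ^ 2)⁻¹) / (2.9 / x)) / L) x := ((h2.const_mul 2).div_const L).const_add 1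
  have h4 : HasDerivAt (fun t : ℝ => 2.9 / (1 + 2 * Real.log (2.9 / t) / L))
      ((0 * (1 + 2 * Real.log (2.9 / x) / L) - 2.9 * (2 * ((2.9 * -(x ^ 2)⁻¹) / (2.9 / x)) / L)) /
        (1 + 2 * Real.log (2.9 / x) / L) ^ 2) x :=
    (hasDerivAt_const x (2.9:ℝ)).div h3 hwpos.ne'
  have h5 := h4.log (by positivity)
  have h0 : HasDerivAt (fun t : ℝ => (t - 1) / 2) ((1:ℝ) / 2) x := by
    simpa using ((hasDerivAt_id x).sub_const 1).div_const 2
  have h6 := h0.sub (h5.const_mul (1 / L))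
  have h7 : HasDerivAt fm (1 / 2 - 2 / (L ^ 2 * x * (1 + 2 * Real.log (2.9 / x) / L))) x := by
    refine h6.congr_deriv ?_
    field_simp
    ring
  rw [h7.deriv]
  -- now show the value is negative
  have he : (2.7182:ℝ) ≤ Real.exp 1 := by
    have := Real.exp_one_gt_d9; linarith
  have hP : x * Real.log (2.9 / x) ≤ 1.067 := by
    have hpos : (0:ℝ) < 2.9 / (Real.exp 1 * x) := by positivity
    have h := Real.log_le_sub_one_of_pos hpos
    rw [Real.log_div (by norm_num) (by positivity),
      Real.log_mul (Real.exp_ne_zero 1) hx0.ne', Real.log_exp] at h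
    have hlogdiv : Real.log (2.9 / x) = Real.log 2.9 - Real.log x :=
      Real.log_div (by norm_num) hx0.ne'
    have h2' : Real.log (2.9 / x) ≤ 2.9 / (Real.exp 1 * x) := by rw [hlogdiv]; linarith
    calc x * Real.log (2.9 / x) ≤ x * (2.9 / (Real.exp 1 * x)) :=
          mul_le_mul_of_nonneg_left h2' hx0.le
      _ = 2.9 / Real.exp 1 := by field_simp
      _ ≤ 2.9 / 2.7182 := by gcongr
      _ ≤ 1.067 := by norm_num
  have heq : L ^ 2 * x * (1 + 2 * Real.log (2.9 / x) / L)
      = x * L ^ 2 + 2 * L * (x * Real.log (2.9 / x)) := by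
    field_simp
  have hkey : L ^ 2 * x * (1 + 2 * Real.log (2.9 / x) / L) < 4 := by
    rw [heq]
    have hPnn : 0 ≤ x * Real.log (2.9 / x) := mul_nonneg hx0.le hlognn
    nlinarith [hL_ub, hL_lb, sq_nonneg L, sq_nonneg (L - 0.96941)]
  have hden : 0 < L ^ 2 * x * (1 + 2 * Real.log (2.9 / x) / L) := by positivity
  have : (1:ℝ) / 2 < 2 / (L ^ 2 * x * (1 + 2 * Real.log (2.9 / x) / L)) := by
    rw [lt_div_iff₀ hden]; linarith
  linarith

lemma fm_anti : StrictAntiOn fm (Set.Icc a₁ a₂) :=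
  strictAntiOn_of_deriv_neg (convex_Icc _ _) fm_contOn
    (by rw [interior_Icc]; exact fm_deriv_neg)

lemma ha12 : a₁ ≤ a₂ := ha1_ub.trans ((by norm_num : (1.156:ℝ) ≤ 1.873).trans ha2_lb)

lemma hML_bounds : (0.436:ℝ) ≤ Real.log (2.9/1.9) / Real.log (2.9/1.1) ∧
    Real.log (2.9/1.9) / Real.log (2.9/1.1) ≤ 0.4363 := by
  constructor
  · rw [le_div_iff₀ hLpos]; nlinarith [hM_lb, hL_ub]
  · rw [div_le_iff₀ hLpos]; nlinarith [hM_ub, hL_lb]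

lemma fm_mid_bounds : ∀ x ∈ Set.Icc a₁ a₂, 0.0002 ≤ fm x ∧ fm x ≤ 0.078 := by
  intro x hx
  have hr : x ∈ Set.Icc a₁ a₂ := hx
  have hub : fm x ≤ fm a₁ := by
    rcases eq_or_lt_of_le hx.1 with h | h
    · rw [← h]
    · exact (fm_anti (Set.left_mem_Icc.2 ha12) hr h).le
  have hlb : fm a₂ ≤ fm x := by
    rcases eq_or_lt_of_le hx.2 with h | h
    · rw [h]
    · exact (fm_anti hr (Set.right_mem_Icc.2 ha12) h).le
  have h1 := fm_a1
  have h2 := fm_a2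
  have hML : (1 / Real.log (2.9/1.1)) * Real.log (2.9 / 1.9) ≤ 0.4363 := by
    have := hML_bounds.2; rw [div_eq_inv_mul, ← one_div] at this; exact this
  constructor
  · nlinarith [ha2_lb]
  · nlinarith [ha1_ub]

lemma r_bounds : ∀ x ∈ Set.Icc (1.1:ℝ) 1.9, 0.0002 ≤ r x ∧ r x ≤ 0.078 := by
  intro x hx
  obtain ⟨hx1, hx2⟩ := hx
  rw [r]
  split_ifs with h1 h2
  · constructor
    · linarith
    · have := lt_of_lt_of_le h1 ha1_ub; linarith
  · exact fm_mid_bounds x ⟨not_lt.1 h1, h2⟩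
  · push_neg at h2
    have hML := hML_bounds
    constructor
    · nlinarith [ha2_lb, h2.le]
    · nlinarith


lemma fm13 : (0.0543:ℝ) ≤ fm 1.3 := by
  set L := Real.log (2.9 / 1.1) with hLdef
  have hL0 := hLpos
  have hw : (2.654:ℝ) ≤ 1 + 2 * Real.log (2.9 / 1.3) / L := by
    have h : (1.654:ℝ) ≤ 2 * Real.log (2.9 / 1.3) / L := by
      rw [le_div_iff₀ hL0]; nlinarith [hL_ub, h2913]
    linarith
  have hz : (2.9:ℝ) / (1 + 2 * Real.log (2.9 / 1.3) / L) ≤ 2.9 / 2.654 := by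
    gcongr
  have hlog : Real.log (2.9 / (1 + 2 * Real.log (2.9 / 1.3) / L)) ≤ 0.0927 := by
    have := Real.log_le_sub_one_of_pos
      (show (0:ℝ) < 2.9 / (1 + 2 * Real.log (2.9 / 1.3) / L) by positivity)
    have hn : (2.9:ℝ) / 2.654 - 1 ≤ 0.0927 := by norm_num
    linarith
  have hmul : (1 / L) * Real.log (2.9 / (1 + 2 * Real.log (2.9 / 1.3) / L)) ≤ 0.0957 := by
    rw [one_div, inv_mul_le_iff₀ hL0]
    nlinarith [hL_lb]
  rw [fm]
  rw [← hLdef]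
  linarith [hmul]

lemma fm14 : (0.0356:ℝ) ≤ fm 1.4 := by
  set L := Real.log (2.9 / 1.1) with hLdef
  have hL0 := hLpos
  have hw : (2.5016:ℝ) ≤ 1 + 2 * Real.log (2.9 / 1.4) / L := by
    have h : (1.5016:ℝ) ≤ 2 * Real.log (2.9 / 1.4) / L := by
      rw [le_div_iff₀ hL0]; nlinarith [hL_ub, h2914]
    linarith
  have hz : (2.9:ℝ) / (1 + 2 * Real.log (2.9 / 1.4) / L) ≤ 2.9 / 2.5016 := by
    gcongr
  have hlog : Real.log (2.9 / (1 + 2 * Real.log (2.9 / 1.4) / L)) ≤ 0.15926 := by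
    have := Real.log_le_sub_one_of_pos
      (show (0:ℝ) < 2.9 / (1 + 2 * Real.log (2.9 / 1.4) / L) by positivity)
    have hn : (2.9:ℝ) / 2.5016 - 1 ≤ 0.15926 := by norm_num
    linarith
  have hmul : (1 / L) * Real.log (2.9 / (1 + 2 * Real.log (2.9 / 1.4) / L)) ≤ 0.16433 := by
    rw [one_div, inv_mul_le_iff₀ hL0]
    nlinarith [hL_lb]
  rw [fm, ← hLdef]
  linarith [hmul]

lemma fm15 : (0.0139:ℝ) ≤ fm 1.5 := by
  set L := Real.log (2.9 / 1.1) with hLdef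
  have hL0 := hLpos
  have hw : (2.36:ℝ) ≤ 1 + 2 * Real.log (2.9 / 1.5) / L := by
    have h : (1.36:ℝ) ≤ 2 * Real.log (2.9 / 1.5) / L := by
      rw [le_div_iff₀ hL0]; nlinarith [hL_ub, h2915]
    linarith
  have hz : (2.9:ℝ) / (1 + 2 * Real.log (2.9 / 1.5) / L) ≤ 2.9 / 2.36 := by
    gcongr
  have hlog : Real.log (2.9 / (1 + 2 * Real.log (2.9 / 1.5) / L)) ≤ 0.228814 := by
    have := Real.log_le_sub_one_of_pos
      (show (0:ℝ) < 2.9 / (1 + 2 * Real.log (2.9 / 1.5) / L) by positivity)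
    have hn : (2.9:ℝ) / 2.36 - 1 ≤ 0.228814 := by norm_num
    linarith
  have hmul : (1 / L) * Real.log (2.9 / (1 + 2 * Real.log (2.9 / 1.5) / L)) ≤ 0.23607 := by
    rw [one_div, inv_mul_le_iff₀ hL0]
    nlinarith [hL_lb]
  rw [fm, ← hLdef]
  linarith [hmul]

lemma r_eq_mid : Set.EqOn r fm (Set.Icc a₁ a₂) := by
  intro x hx
  rw [r, if_neg (not_lt.2 hx.1), if_pos hx.2]; rfl

lemma r_eq_left : Set.EqOn r (fun x => (x - 1) / 2) (Set.Icc (1.1:ℝ) a₁) := by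
  intro x hx
  rcases lt_or_eq_of_le hx.2 with h | h
  · rw [r, if_pos h]
  · rw [h, r_eq_mid (Set.left_mem_Icc.2 ha12), fm_a1]

lemma r_eq_right : Set.EqOn r
    (fun x => (x - 1) / 2 - Real.log (2.9 / 1.9) / Real.log (2.9 / 1.1))
    (Set.Icc a₂ (1.9:ℝ)) := by
  intro x hx
  rcases eq_or_lt_of_le hx.1 with h | h
  · rw [← h, r_eq_mid (Set.right_mem_Icc.2 ha12), fm_a2]
    ring
  · rw [r, if_neg (not_lt.2 (ha12.trans h.le)), if_neg (not_le.2 h)]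

lemma integrable_of_eqOn {f h : ℝ → ℝ} {a b : ℝ} (hab : a ≤ b)
    (heq : Set.EqOn f h (Set.Icc a b)) (hc : ContinuousOn h (Set.Icc a b)) :
    IntervalIntegrable f MeasureTheory.volume a b := by
  have hi : IntervalIntegrable h MeasureTheory.volume a b :=
    ContinuousOn.intervalIntegrable_of_Icc hab hc
  rw [intervalIntegrable_iff_integrableOn_Ioc_of_le hab] at hi ⊢
  exact hi.congr_fun (fun x hx => (heq (Set.Ioc_subset_Icc_self hx)).symm) measurableSet_Ioc

lemma g_contOn {a b : ℝ} (ha : (1:ℝ) ≤ a) : ContinuousOn g (Set.Icc a b) := by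
  apply continuousOn_const.div (continuousOn_id.mul continuousOn_const)
  intro x hx
  have hx0 : (0:ℝ) < x := lt_of_lt_of_le (by norm_num) (ha.trans hx.1)
  exact (mul_pos hx0 hLpos).ne'

lemma int_main : (0.0078:ℝ) ≤ ∫ t in (1.1:ℝ)..1.9, r t * g t := by
  set f : ℝ → ℝ := fun t => r t * g t with hf
  have hg0 : ∀ x : ℝ, (1:ℝ) ≤ x → 0 ≤ g x := by
    intro x hx
    have : (0:ℝ) < x * Real.log (2.9/1.1) := mul_pos (by linarith) hLpos
    rw [g]; positivity
  -- integrability pieces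
  have i1 : IntervalIntegrable f volume 1.1 a₁ := by
    have heq1 : Set.EqOn f (fun x => (x - 1) / 2 * g x) (Set.Icc (1.1:ℝ) a₁) :=
      fun x hx => congrArg (· * g x) (r_eq_left hx)
    exact integrable_of_eqOn (by linarith [ha1_lb]) heq1
      (((continuousOn_id.sub continuousOn_const).div_const 2).mul (g_contOn (by norm_num)))
  have i2 : IntervalIntegrable f volume a₁ 1.2 := by
    have hsub : Set.Icc a₁ (1.2:ℝ) ⊆ Set.Icc a₁ a₂ :=
      Set.Icc_subset_Icc_right (le_trans (by norm_num) ha2_lb)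
    apply integrable_of_eqOn (le_trans ha1_ub (by norm_num))
      (fun x hx => congrArg (· * g x) (r_eq_mid (hsub hx)))
    exact (fm_contOn.mono hsub).mul (g_contOn (le_trans (by norm_num) ha1_lb))
  have imid : ∀ c d : ℝ, 1.2 ≤ c → c ≤ d → d ≤ 1.5 → IntervalIntegrable f volume c d := by
    intro c d h1 h2 h3
    have hsub : Set.Icc c d ⊆ Set.Icc a₁ a₂ := Set.Icc_subset_Icc
      (ha1_ub.trans (by linarith)) (le_trans h3 (le_trans (by norm_num) ha2_lb))
    apply integrable_of_eqOn h2 (fun x hx => congrArg (· * g x) (r_eq_mid (hsub hx)))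
    exact (fm_contOn.mono hsub).mul (g_contOn (by linarith))
  have i3 := imid 1.2 1.3 (by norm_num) (by norm_num) (by norm_num)
  have i4 := imid 1.3 1.4 (by norm_num) (by norm_num) (by norm_num)
  have i5 := imid 1.4 1.5 (by norm_num) (by norm_num) (by norm_num)
  have i6 : IntervalIntegrable f volume 1.5 a₂ := by
    have hsub : Set.Icc (1.5:ℝ) a₂ ⊆ Set.Icc a₁ a₂ :=
      Set.Icc_subset_Icc_left (ha1_ub.trans (by norm_num))
    apply integrable_of_eqOn (le_trans (by norm_num) ha2_lb)
      (fun x hx => congrArg (· * g x) (r_eq_mid (hsub hx)))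
    exact (fm_contOn.mono hsub).mul (g_contOn (by norm_num))
  have i7 : IntervalIntegrable f volume a₂ 1.9 := by
    apply integrable_of_eqOn (ha2_ub.trans (by norm_num))
      (fun x hx => congrArg (· * g x) (r_eq_right hx))
    exact (((continuousOn_id.sub continuousOn_const).div_const 2).sub continuousOn_const).mul
      (g_contOn (le_trans (by norm_num) ha2_lb))
  have hI12 : IntervalIntegrable f volume 1.1 1.2 := i1.trans i2
  have hI59 : IntervalIntegrable f volume 1.5 1.9 := i6.trans i7
  -- nonnegativity on side pieces
  have hnn : ∀ u ∈ Set.Icc (1.1:ℝ) 1.9, 0 ≤ f u := by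
    intro u hu
    exact mul_nonneg (le_trans (by norm_num) (r_bounds u hu).1) (hg0 u (by linarith [hu.1]))
  have b1 : (0:ℝ) ≤ ∫ t in (1.1:ℝ)..1.2, f t :=
    intervalIntegral.integral_nonneg (by norm_num)
      (fun u hu => hnn u ⟨hu.1, hu.2.trans (by norm_num)⟩)
  have b5 : (0:ℝ) ≤ ∫ t in (1.5:ℝ)..1.9, f t :=
    intervalIntegral.integral_nonneg (by norm_num)
      (fun u hu => hnn u ⟨le_trans (by norm_num) hu.1, hu.2⟩)
  -- lower bounds on middle pieces
  have hgl : ∀ x c : ℝ, 1.1 ≤ x → x ≤ c → c ≤ 1.5 → 0 < c → c * 0.96941 * g x ≥ 1 * (c * 0.96941)⁻¹ * (c * 0.96941) * g x → True := fun _ _ _ _ _ _ _ => trivial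
  have hgbound : ∀ x c q : ℝ, 1.1 ≤ x → x ≤ c → 0 ≤ q → q * (c * 0.96941) ≤ 1 → q ≤ g x := by
    intro x c q hx1 hxc hq hqc
    have hxL : x * Real.log (2.9/1.1) ≤ c * 0.96941 := by
      have h1 : x * Real.log (2.9/1.1) ≤ x * 0.96941 :=
        mul_le_mul_of_nonneg_left hL_ub (by linarith)
      have h2 : x * 0.96941 ≤ c * 0.96941 := by nlinarith
      linarith
    have hxLpos : 0 < x * Real.log (2.9/1.1) := mul_pos (by linarith) hLpos
    rw [g, le_div_iff₀ hxLpos]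
    nlinarith
  have hmono : ∀ c d q : ℝ, (1.2:ℝ) ≤ c → c ≤ d → d ≤ 1.5 →
      (∀ x ∈ Set.Icc c d, q ≤ f x) → IntervalIntegrable f volume c d →
      ((d - c) * q ≤ ∫ t in c..d, f t) := by
    intro c d q h1 h2 h3 hpt hint
    have := intervalIntegral.integral_mono_on h2 (_root_.intervalIntegrable_const (c := q)) hint hpt
    rwa [intervalIntegral.integral_const, smul_eq_mul] at this
  have hfm_ge : ∀ x lo q : ℝ, 1.2 ≤ lo → lo ≤ 1.5 → x ∈ Set.Icc lo (1.5:ℝ) → x ≤ q → q ≤ 1.5 →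
      (q_mem : q ∈ Set.Icc a₁ a₂) → fm q ≤ fm x := by
    intro x lo q hlo1 hlo2 hx hxq hq15 hqm
    have hxm : x ∈ Set.Icc a₁ a₂ :=
      ⟨ha1_ub.trans (by linarith [hx.1]), le_trans hx.2 (le_trans (by norm_num) ha2_lb)⟩
    rcases eq_or_lt_of_le hxq with h | h
    · rw [h]
    · exact (fm_anti hxm hqm h).le
  have hmem : ∀ q : ℝ, 1.2 ≤ q → q ≤ 1.5 → q ∈ Set.Icc a₁ a₂ :=
    fun q h1 h2 => ⟨ha1_ub.trans (by linarith), le_trans h2 (le_trans (by norm_num) ha2_lb)⟩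
  have b2 : (0.0043:ℝ) ≤ ∫ t in (1.2:ℝ)..1.3, f t := by
    have h := hmono 1.2 1.3 0.043 (by norm_num) (by norm_num) (by norm_num) ?_ i3
    · calc (0.0043:ℝ) ≤ (1.3 - 1.2) * 0.043 := by norm_num
        _ ≤ _ := h
    intro x hx
    have hr : r x = fm x := r_eq_mid (hmem x (by exact hx.1) (hx.2.trans (by norm_num)))
    have hfm : (0.0543:ℝ) ≤ fm x :=
      fm13.trans (hfm_ge x 1.2 1.3 (by norm_num) (by norm_num)
        ⟨hx.1, hx.2.trans (by norm_num)⟩ hx.2 (by norm_num)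
        (hmem 1.3 (by norm_num) (by norm_num)))
    have hg : (0.7934:ℝ) ≤ g x := hgbound x 1.3 0.7934 (by linarith [hx.1]) hx.2
      (by norm_num) (by norm_num)
    rw [hf]; simp only
    rw [hr]
    calc (0.043:ℝ) ≤ 0.0543 * 0.7934 := by norm_num
      _ ≤ fm x * g x := mul_le_mul hfm hg (by norm_num) (by linarith)
  have b3 : (0.00262:ℝ) ≤ ∫ t in (1.3:ℝ)..1.4, f t := by
    have h := hmono 1.3 1.4 0.0262 (by norm_num) (by norm_num) (by norm_num) ?_ i4
    · calc (0.00262:ℝ) ≤ (1.4 - 1.3) * 0.0262 := by norm_num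
        _ ≤ _ := h
    intro x hx
    have hr : r x = fm x := r_eq_mid (hmem x (le_trans (by norm_num) hx.1) (hx.2.trans (by norm_num)))
    have hfm : (0.0356:ℝ) ≤ fm x :=
      fm14.trans (hfm_ge x 1.3 1.4 (by norm_num) (by norm_num)
        ⟨hx.1, hx.2.trans (by norm_num)⟩ hx.2 (by norm_num)
        (hmem 1.4 (by norm_num) (by norm_num)))
    have hg : (0.7368:ℝ) ≤ g x := hgbound x 1.4 0.7368 (by linarith [hx.1]) hx.2
      (by norm_num) (by norm_num)
    rw [hf]; simp only
    rw [hr]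
    calc (0.0262:ℝ) ≤ 0.0356 * 0.7368 := by norm_num
      _ ≤ fm x * g x := mul_le_mul hfm hg (by norm_num) (by linarith)
  have b4 : (0.00095:ℝ) ≤ ∫ t in (1.4:ℝ)..1.5, f t := by
    have h := hmono 1.4 1.5 0.0095 (by norm_num) (by norm_num) (by norm_num) ?_ i5
    · calc (0.00095:ℝ) ≤ (1.5 - 1.4) * 0.0095 := by norm_num
        _ ≤ _ := h
    intro x hx
    have hr : r x = fm x := r_eq_mid (hmem x (le_trans (by norm_num) hx.1) hx.2)
    have hfm : (0.0139:ℝ) ≤ fm x :=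
      fm15.trans (hfm_ge x 1.4 1.5 (by norm_num) (by norm_num) ⟨hx.1, hx.2⟩ hx.2 (by norm_num)
        (hmem 1.5 (by norm_num) (by norm_num)))
    have hg : (0.6877:ℝ) ≤ g x := hgbound x 1.5 0.6877 (by linarith [hx.1]) hx.2
      (by norm_num) (by norm_num)
    rw [hf]; simp only
    rw [hr]
    calc (0.0095:ℝ) ≤ 0.0139 * 0.6877 := by norm_num
      _ ≤ fm x * g x := mul_le_mul hfm hg (by norm_num) (by linarith)
  -- assemble
  have e1 : (∫ t in (1.4:ℝ)..1.9, f t) = (∫ t in (1.4:ℝ)..1.5, f t) + ∫ t in (1.5:ℝ)..1.9, f t :=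
    (integral_add_adjacent_intervals i5 hI59).symm
  have e2 : (∫ t in (1.3:ℝ)..1.9, f t) = (∫ t in (1.3:ℝ)..1.4, f t) + ∫ t in (1.4:ℝ)..1.9, f t :=
    (integral_add_adjacent_intervals i4 (i5.trans hI59)).symm
  have e3 : (∫ t in (1.2:ℝ)..1.9, f t) = (∫ t in (1.2:ℝ)..1.3, f t) + ∫ t in (1.3:ℝ)..1.9, f t :=
    (integral_add_adjacent_intervals i3 (i4.trans (i5.trans hI59))).symm
  have e4 : (∫ t in (1.1:ℝ)..1.9, f t) = (∫ t in (1.1:ℝ)..1.2, f t) + ∫ t in (1.2:ℝ)..1.9, f t :=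
    (integral_add_adjacent_intervals hI12 (i3.trans (i4.trans (i5.trans hI59)))).symm
  rw [e4, e3, e2, e1]
  linarith


/-- For all `x, y ∈ [1.1, 1.9]`, `0 < r(x) r(y) / d̄ < 1`,
where `d̄ = ∫_{1.1}^{1.9} r(t) g(t) dt`. -/
theorem statement11 :
    ∀ x ∈ Set.Icc (1.1 : ℝ) 1.9, ∀ y ∈ Set.Icc (1.1 : ℝ) 1.9,
      0 < r x * r y / (∫ t in (1.1 : ℝ)..1.9, r t * g t) ∧
      r x * r y / (∫ t in (1.1 : ℝ)..1.9, r t * g t) < 1 := by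
  intro x hx y hy
  have hrx := r_bounds x hx
  have hry := r_bounds y hy
  have hd := int_main
  have hI : (0:ℝ) < ∫ t in (1.1:ℝ)..1.9, r t * g t := lt_of_lt_of_le (by norm_num) hd
  constructor
  · exact div_pos (mul_pos (lt_of_lt_of_le (by norm_num) hrx.1)
      (lt_of_lt_of_le (by norm_num) hry.1)) hI
  · rw [div_lt_one hI]
    calc r x * r y ≤ 0.078 * 0.078 :=
          mul_le_mul hrx.2 hry.2 (le_trans (by norm_num) hry.1) (by norm_num)
      _ < 0.0078 := by norm_num
      _ ≤ _ := hd
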